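/- There exists a connected cubic graph G admitting a perfect matching such that for every pair of perfect matchings M1, M2 of G, the complement of M1 ∪ M2 contains an odd cycle (i.e., G has no S4-pair). -/

import Mathlib

open SimpleGraph

/-- Edge list of the witness graph: a triangle `{0,6,12}`, and for each
triangle vertex `k ∈ {0,6,12}` a bridge `k–(k+1)` to a pendant block on
`{k+1,…,k+5}` (a `K₄` on `{k+2,…,k+5}` with the edge `(k+4)(k+5)` subdivided
by `k+1`). -/
def E18 : List (Fin 18 × Fin 18) :=
  [(0,6),(6,12),(0,12),
   (0,1),(1,4),(1,5),(2,3),(2,4),(2,5),(3,4),(3,5),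
   (6,7),(7,10),(7,11),(8,9),(8,10),(8,11),(9,10),(9,11),
   (12,13),(13,16),(13,17),(14,15),(14,16),(14,17),(15,16),(15,17)]

def G18 : SimpleGraph (Fin 18) where
  Adj x y := x ≠ y ∧ ((x,y) ∈ E18 ∨ (y,x) ∈ E18)
  symm := ⟨by intro x y ⟨h1,h2⟩; exact ⟨h1.symm, h2.symm⟩⟩
  loopless := ⟨by intro x ⟨h1,_⟩; exact h1 rfl⟩

instance : DecidableRel G18.Adj := fun x y =>
  inferInstanceAs (Decidable (x ≠ y ∧ ((x,y) ∈ E18 ∨ (y,x) ∈ E18)))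

lemma reach0 : ∀ v, G18.Reachable 0 v := by
  have e : ∀ x y : Fin 18, G18.Adj x y → G18.Reachable x y := fun _ _ h => h.reachable
  have h1 : G18.Reachable 0 1 := e _ _ (by decide)
  have h4 : G18.Reachable 0 4 := h1.trans (e 1 4 (by decide))
  have h5 : G18.Reachable 0 5 := h1.trans (e 1 5 (by decide))
  have h2 : G18.Reachable 0 2 := h4.trans (e 4 2 (by decide))
  have h3 : G18.Reachable 0 3 := h2.trans (e 2 3 (by decide))
  have h6 : G18.Reachable 0 6 := e _ _ (by decide)
  have h7 : G18.Reachable 0 7 := h6.trans (e 6 7 (by decide))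
  have h10 : G18.Reachable 0 10 := h7.trans (e 7 10 (by decide))
  have h11 : G18.Reachable 0 11 := h7.trans (e 7 11 (by decide))
  have h8 : G18.Reachable 0 8 := h10.trans (e 10 8 (by decide))
  have h9 : G18.Reachable 0 9 := h8.trans (e 8 9 (by decide))
  have h12 : G18.Reachable 0 12 := e _ _ (by decide)
  have h13 : G18.Reachable 0 13 := h12.trans (e 12 13 (by decide))
  have h16 : G18.Reachable 0 16 := h13.trans (e 13 16 (by decide))
  have h17 : G18.Reachable 0 17 := h13.trans (e 13 17 (by decide))
  have h14 : G18.Reachable 0 14 := h16.trans (e 16 14 (by decide))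
  have h15 : G18.Reachable 0 15 := h14.trans (e 14 15 (by decide))
  intro v
  fin_cases v <;> first | rfl | assumption

lemma G18conn : G18.Connected :=
  ⟨fun u v => (reach0 u).symm.trans (reach0 v)⟩

lemma G18cubic : ∀ v, (G18.neighborSet v).ncard = 3 := by
  intro v
  rw [Set.ncard_eq_toFinset_card']
  revert v; decide

/-- pairing function: 0-1, 2-4, 3-5 in each copy -/
def m18 : Fin 18 → Fin 18 := fun x =>
  match (x : ℕ) % 6 with
  | 0 => x + 1 | 1 => x - 1 | 2 => x + 2 | 3 => x + 2 | 4 => x - 2 | _ => x - 2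

def M18 : G18.Subgraph where
  verts := Set.univ
  Adj x y := m18 x = y
  adj_sub := by intro v w h; revert h; revert v w; decide
  edge_vert := fun _ => Set.mem_univ _
  symm := ⟨by intro v w h; revert h; revert v w; decide⟩

lemma M18pm : M18.IsPerfectMatching := by
  constructor
  · intro v _
    exact ⟨m18 v, rfl, fun y hy => Eq.symm hy⟩
  · intro v; exact Set.mem_univ v

lemma uniqM {M : G18.Subgraph} (hM : M.IsMatching) {x a b : Fin 18}
    (h1 : M.Adj x a) (h2 : M.Adj x b) : a = b :=
  (hM (M.edge_vert h1)).unique h1 h2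

/-- In any perfect matching, each bridge edge (k, k+1) for k ∈ {0,6,12} is used:
otherwise the pendant block, which has 5 vertices, would have to be matched
internally. -/
lemma bridge {M : G18.Subgraph} (hM : M.IsPerfectMatching) (k : Fin 18)
    (hk : k = 0 ∨ k = 6 ∨ k = 12) : M.Adj k (k+1) := by
  have hn1 : ∀ y, G18.Adj (k+1) y → y = k ∨ y = k+4 ∨ y = k+5 := by
    rcases hk with h|h|h <;> subst h <;> decide
  have hn2 : ∀ y, G18.Adj (k+2) y → y = k+3 ∨ y = k+4 ∨ y = k+5 := by
    rcases hk with h|h|h <;> subst h <;> decide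
  have hn3 : ∀ y, G18.Adj (k+3) y → y = k+2 ∨ y = k+4 ∨ y = k+5 := by
    rcases hk with h|h|h <;> subst h <;> decide
  have hn5 : ∀ y, G18.Adj (k+5) y → y = k+1 ∨ y = k+2 ∨ y = k+3 := by
    rcases hk with h|h|h <;> subst h <;> decide
  have hne : ∀ a b : Fin 18, a ≠ b → k + a ≠ k + b := by
    intro a b hab h; exact hab (add_left_cancel h)
  -- partner of k+1
  obtain ⟨y, hy, -⟩ := hM.1 (hM.2 (k+1))
  rcases hn1 y (M.adj_sub hy) with rfl|rfl|rfl
  · exact hy.symm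
  · -- w matched to c = k+4 ; look at a = k+2
    obtain ⟨z, hz, -⟩ := hM.1 (hM.2 (k+2))
    rcases hn2 z (M.adj_sub hz) with rfl|rfl|rfl
    · -- a–b ; then d = k+5 stuck
      obtain ⟨p, hp, -⟩ := hM.1 (hM.2 (k+5))
      rcases hn5 p (M.adj_sub hp) with rfl|rfl|rfl
      · exact absurd (uniqM hM.1 hp.symm hy) (hne _ _ (by decide))
      · exact absurd (uniqM hM.1 hp.symm hz) (hne _ _ (by decide))
      · exact absurd (uniqM hM.1 hp.symm hz.symm) (hne _ _ (by decide))
    · exact absurd (uniqM hM.1 hz.symm hy.symm) (hne _ _ (by decide))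
    · -- a–d ; then b = k+3 stuck
      obtain ⟨p, hp, -⟩ := hM.1 (hM.2 (k+3))
      rcases hn3 p (M.adj_sub hp) with rfl|rfl|rfl
      · exact absurd (uniqM hM.1 hp.symm hz) (hne _ _ (by decide))
      · exact absurd (uniqM hM.1 hp.symm hy.symm) (hne _ _ (by decide))
      · exact absurd (uniqM hM.1 hp.symm hz.symm) (hne _ _ (by decide))
  · -- w matched to d = k+5 ; look at a = k+2
    obtain ⟨z, hz, -⟩ := hM.1 (hM.2 (k+2))
    rcases hn2 z (M.adj_sub hz) with rfl|rfl|rfl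
    · -- a–b ; then c = k+4 stuck
      have hn4 : ∀ y, G18.Adj (k+4) y → y = k+1 ∨ y = k+2 ∨ y = k+3 := by
        rcases hk with h|h|h <;> subst h <;> decide
      obtain ⟨p, hp, -⟩ := hM.1 (hM.2 (k+4))
      rcases hn4 p (M.adj_sub hp) with rfl|rfl|rfl
      · exact absurd (uniqM hM.1 hp.symm hy) (hne _ _ (by decide))
      · exact absurd (uniqM hM.1 hp.symm hz) (hne _ _ (by decide))
      · exact absurd (uniqM hM.1 hp.symm hz.symm) (hne _ _ (by decide))
    · -- a–c ; then b = k+3 stuck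
      obtain ⟨p, hp, -⟩ := hM.1 (hM.2 (k+3))
      rcases hn3 p (M.adj_sub hp) with rfl|rfl|rfl
      · exact absurd (uniqM hM.1 hp.symm hz) (hne _ _ (by decide))
      · exact absurd (uniqM hM.1 hp.symm hz.symm) (hne _ _ (by decide))
      · exact absurd (uniqM hM.1 hp.symm hy.symm) (hne _ _ (by decide))
    · exact absurd (uniqM hM.1 hz.symm hy.symm) (hne _ _ (by decide))

/-- No perfect matching uses a triangle edge. -/
lemma no_tri {M : G18.Subgraph} (hM : M.IsPerfectMatching) :
    ¬ M.Adj 0 6 ∧ ¬ M.Adj 6 12 ∧ ¬ M.Adj 0 12 := by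
  have b0 := bridge hM 0 (Or.inl rfl)
  have b6 := bridge hM 6 (Or.inr (Or.inl rfl))
  refine ⟨fun h => ?_, fun h => ?_, fun h => ?_⟩
  · exact absurd (uniqM hM.1 h b0) (by decide)
  · exact absurd (uniqM hM.1 h b6) (by decide)
  · exact absurd (uniqM hM.1 h b0) (by decide)

/-- A graph is cubic if every vertex has exactly 3 neighbours. -/
def IsCubic {V : Type*} (G : SimpleGraph V) : Prop :=
  ∀ v : V, (G.neighborSet v).ncard = 3

/-- There is a connected cubic graph which has a perfect matching but no
`S₄`-pair: for every two perfect matchings `M1, M2`, the complement of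
`M1 ∪ M2` contains an odd cycle (is not bipartite). -/
theorem stmt_18 :
    ∃ (n : ℕ) (G : SimpleGraph (Fin n)),
      G.Connected ∧ IsCubic G ∧
      (∃ M : G.Subgraph, M.IsPerfectMatching) ∧
      ∀ M1 M2 : G.Subgraph, M1.IsPerfectMatching → M2.IsPerfectMatching →
        ¬ (G.deleteEdges (M1.edgeSet ∪ M2.edgeSet)).Colorable 2 := by
  refine ⟨18, G18, G18conn, G18cubic, ⟨M18, M18pm⟩, ?_⟩
  intro M1 M2 h1 h2 hcol
  obtain ⟨C⟩ := hcol
  obtain ⟨n1a, n1b, n1c⟩ := no_tri h1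
  obtain ⟨n2a, n2b, n2c⟩ := no_tri h2
  set H := G18.deleteEdges (M1.edgeSet ∪ M2.edgeSet)
  have hadj : ∀ x y : Fin 18, G18.Adj x y → ¬ M1.Adj x y → ¬ M2.Adj x y → H.Adj x y := by
    intro x y hg hm1 hm2
    rw [deleteEdges_adj]
    refine ⟨hg, fun hmem => ?_⟩
    rcases hmem with h|h
    · exact hm1 (Subgraph.mem_edgeSet.mp h)
    · exact hm2 (Subgraph.mem_edgeSet.mp h)
  have c1 := C.valid (hadj 0 6 (by decide) n1a n2a)
  have c2 := C.valid (hadj 6 12 (by decide) n1b n2b)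
  have c3 := C.valid (hadj 0 12 (by decide) n1c n2c)
  have v1 : (C 0).val < 2 := (C 0).is_lt
  have v2 : (C 6).val < 2 := (C 6).is_lt
  have v3 : (C 12).val < 2 := (C 12).is_lt
  rw [Ne, Fin.ext_iff] at c1 c2 c3
  omega
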